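/- Let N be a topological space and Φ : ℝ × N → N a continuous flow (Φ(0,·) = id and Φ(s+t,·) = Φ(s,·)∘Φ(t,·)) which is 1-periodic, i.e. Φ(1,·) = id. Then the formula (p,q)·(u,v,n) = (u+p, v+q, Φ(pv, n)) defines an action of ℤ² on ℝ² × N by homeomorphisms; this action is free, and it is properly discontinuous in the sense that for every compact subset K ⊆ ℝ² × N only finitely many (p,q) ∈ ℤ² satisfy ((p,q)·K) ∩ K ≠ ∅. Moreover, if N is compact, then the quotient space (ℝ² × N)/ℤ² is compact. -/

import Mathlib

/-- The map of the higher-dimensional construction: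
`(p,q)·(u,v,n) = (u+p, v+q, Φ(p·v, n))`. -/
def hdA {N : Type*} (Φ : ℝ × N → N) (a : ℤ × ℤ) (x : ℝ × ℝ × N) : ℝ × ℝ × N :=
  (x.1 + a.1, x.2.1 + a.2, Φ ((a.1 : ℝ) * x.2.1, x.2.2))

section Aux

variable {N : Type*} [TopologicalSpace N] (Φ : ℝ × N → N)

theorem hdA_int (hΦ0 : ∀ m : N, Φ (0, m) = m)
    (hΦadd : ∀ s t : ℝ, ∀ m : N, Φ (s + t, m) = Φ (s, Φ (t, m)))
    (hΦper : ∀ m : N, Φ (1, m) = m) : ∀ k : ℤ, ∀ m : N, Φ ((k : ℝ), m) = m := by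
  intro k
  induction k using Int.induction_on with
  | zero => simpa using hΦ0
  | succ n ih =>
    intro m
    push_cast at ih ⊢
    rw [add_comm, hΦadd, ih, hΦper]
  | pred n ih =>
    intro m
    have h1 : Φ ((-n - 1 : ℝ), m) = Φ ((-n - 1 : ℝ) + 1, m) := by
      rw [hΦadd, hΦper]
    have h2 : ((-n - 1 : ℝ) + 1) = ((-n : ℤ) : ℝ) := by push_cast; ring
    have : ((-(n : ℤ) - 1 : ℤ) : ℝ) = (-n - 1 : ℝ) := by push_cast; ring
    rw [this, h1, h2, ih]

theorem hdA_shift (hΦ0 : ∀ m : N, Φ (0, m) = m)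
    (hΦadd : ∀ s t : ℝ, ∀ m : N, Φ (s + t, m) = Φ (s, Φ (t, m)))
    (hΦper : ∀ m : N, Φ (1, m) = m) :
    ∀ k : ℤ, ∀ s : ℝ, ∀ m : N, Φ ((k : ℝ) + s, m) = Φ (s, m) := by
  intro k s m
  rw [hΦadd, hdA_int Φ hΦ0 hΦadd hΦper]

theorem hdA_zero' (hΦ0 : ∀ m : N, Φ (0, m) = m) :
    ∀ x : ℝ × ℝ × N, hdA Φ (0, 0) x = x := by
  intro ⟨u, v, n⟩
  simp [hdA, hΦ0]

theorem hdA_add' (hΦ0 : ∀ m : N, Φ (0, m) = m)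
    (hΦadd : ∀ s t : ℝ, ∀ m : N, Φ (s + t, m) = Φ (s, Φ (t, m)))
    (hΦper : ∀ m : N, Φ (1, m) = m) :
    ∀ a b : ℤ × ℤ, ∀ x : ℝ × ℝ × N, hdA Φ (a + b) x = hdA Φ a (hdA Φ b x) := by
  intro ⟨p, q⟩ ⟨p', q'⟩ ⟨u, v, n⟩
  simp only [hdA, Prod.mk.injEq, Prod.fst_add, Prod.snd_add]
  refine ⟨by push_cast; ring, by push_cast; ring, ?_⟩
  have h1 : ((p : ℝ) * (v + (q' : ℝ))) = ((p * q' : ℤ) : ℝ) + (p : ℝ) * v := by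
    push_cast; ring
  rw [h1, hdA_shift Φ hΦ0 hΦadd hΦper, ← hΦadd]
  congr 1
  push_cast; ring

end Aux

/-- If `Φ` is a continuous 1-periodic flow on `N`, the formula
`(p,q)·(u,v,n) = (u+p, v+q, Φ(p·v, n))` defines a free, properly discontinuous action
of `ℤ²` on `ℝ² × N` by homeomorphisms, whose quotient is compact when `N` is compact. -/
theorem stmt_18 {N : Type*} [TopologicalSpace N] (Φ : ℝ × N → N)
    (hΦc : Continuous Φ)
    (hΦ0 : ∀ m : N, Φ (0, m) = m)
    (hΦadd : ∀ s t : ℝ, ∀ m : N, Φ (s + t, m) = Φ (s, Φ (t, m)))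
    (hΦper : ∀ m : N, Φ (1, m) = m) :
    (∀ x : ℝ × ℝ × N, hdA Φ (0, 0) x = x) ∧
    (∀ a b : ℤ × ℤ, ∀ x : ℝ × ℝ × N, hdA Φ (a + b) x = hdA Φ a (hdA Φ b x)) ∧
    (∀ a : ℤ × ℤ, ∃ h : (ℝ × ℝ × N) ≃ₜ (ℝ × ℝ × N), ⇑h = hdA Φ a) ∧
    (∀ (a : ℤ × ℤ) (x : ℝ × ℝ × N), hdA Φ a x = x → a = 0) ∧
    (∀ K : Set (ℝ × ℝ × N), IsCompact K →
      {a : ℤ × ℤ | (hdA Φ a '' K ∩ K).Nonempty}.Finite) ∧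
    (CompactSpace N →
      CompactSpace (Quot fun x y : ℝ × ℝ × N => ∃ a : ℤ × ℤ, hdA Φ a x = y)) := by
  have hzero := hdA_zero' Φ hΦ0
  have hadd := hdA_add' Φ hΦ0 hΦadd hΦper
  have hcont : ∀ a : ℤ × ℤ, Continuous (hdA Φ a) := by
    intro a
    unfold hdA
    exact ((continuous_fst.add continuous_const).prodMk
      (((continuous_fst.comp continuous_snd).add continuous_const).prodMk
        (hΦc.comp ((continuous_const.mul (continuous_fst.comp continuous_snd)).prodMk
          (continuous_snd.comp continuous_snd)))))
  have hinv : ∀ a : ℤ × ℤ, ∀ x, hdA Φ (-a) (hdA Φ a x) = x := by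
    intro a x
    rw [← hadd, neg_add_cancel]
    exact hzero x
  refine ⟨hzero, hadd, ?_, ?_, ?_, ?_⟩
  · intro a
    refine ⟨⟨⟨hdA Φ a, hdA Φ (-a), ?_, ?_⟩, hcont a, hcont (-a)⟩, rfl⟩
    · intro x; exact hinv a x
    · intro x; simpa using hinv (-a) x
  · rintro ⟨p, q⟩ ⟨u, v, n⟩ h
    simp only [hdA, Prod.mk.injEq] at h
    have h1 : (p : ℝ) = 0 := by linarith [h.1]
    have h2 : (q : ℝ) = 0 := by linarith [h.2.1]
    have : p = 0 := by exact_mod_cast h1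
    have : q = 0 := by exact_mod_cast h2
    simp_all [Prod.ext_iff]
  · intro K hK
    obtain ⟨C, hC⟩ := (hK.image continuous_fst).isBounded.subset_closedBall 0
    obtain ⟨D, hD⟩ := (hK.image (continuous_fst.comp continuous_snd)).isBounded.subset_closedBall 0
    have hC' : ∀ x ∈ K, |x.1| ≤ C := by
      intro x hx
      have := hC ⟨x, hx, rfl⟩
      simpa [Real.dist_eq] using this
    have hD' : ∀ x ∈ K, |x.2.1| ≤ D := by
      intro x hx
      have := hD ⟨x, hx, rfl⟩
      simpa [Real.dist_eq] using this
    apply Set.Finite.subset (Set.finite_Icc (-⌈2*C⌉, -⌈2*D⌉) (⌈2*C⌉, ⌈2*D⌉))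
    rintro ⟨p, q⟩ ⟨z, ⟨⟨y, hyK, rfl⟩, hzK⟩⟩
    have h1 : |(p : ℝ)| ≤ 2 * C := by
      have a1 := hC' _ hyK
      have a2 := hC' _ hzK
      simp only [hdA] at a2
      rw [abs_le] at *
      constructor <;> linarith [a1.1, a1.2, a2.1, a2.2]
    have h2 : |(q : ℝ)| ≤ 2 * D := by
      have a1 := hD' _ hyK
      have a2 := hD' _ hzK
      simp only [hdA] at a2
      rw [abs_le] at *
      constructor <;> linarith [a1.1, a1.2, a2.1, a2.2]
    rw [abs_le] at h1 h2
    have c1 : (p : ℝ) ≤ (⌈2*C⌉ : ℝ) := h1.2.trans (Int.le_ceil _)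
    have c2 : (-⌈2*C⌉ : ℝ) ≤ (p : ℝ) := le_trans (by linarith [Int.le_ceil (2*C)]) h1.1
    have c3 : (q : ℝ) ≤ (⌈2*D⌉ : ℝ) := h2.2.trans (Int.le_ceil _)
    have c4 : (-⌈2*D⌉ : ℝ) ≤ (q : ℝ) := le_trans (by linarith [Int.le_ceil (2*D)]) h2.1
    refine Set.mem_Icc.mpr ⟨⟨?_, ?_⟩, ⟨?_, ?_⟩⟩
    · exact_mod_cast c2
    · exact_mod_cast c4
    · exact_mod_cast c1
    · exact_mod_cast c3
  · intro hN
    refine ⟨?_⟩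
    have hsurj : Set.univ =
        Quot.mk (fun x y : ℝ × ℝ × N => ∃ a : ℤ × ℤ, hdA Φ a x = y) ''
          (Set.Icc 0 1 ×ˢ Set.Icc 0 1 ×ˢ Set.univ) := by
      apply Set.eq_of_subset_of_subset _ (Set.subset_univ _)
      rintro z -
      obtain ⟨⟨u, v, n⟩, rfl⟩ := Quot.exists_rep z
      refine ⟨hdA Φ (-⌊u⌋, -⌊v⌋) (u, v, n), ?_, ?_⟩
      · simp only [hdA, Set.mem_prod, Set.mem_Icc, Set.mem_univ, and_true]
        push_cast
        refine ⟨⟨?_, ?_⟩, ?_, ?_⟩ <;>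
          linarith [Int.floor_le u, Int.lt_floor_add_one u,
            Int.floor_le v, Int.lt_floor_add_one v]
      · exact (Quot.sound ⟨(-⌊u⌋, -⌊v⌋), rfl⟩).symm
    rw [hsurj]
    exact ((isCompact_Icc.prod (isCompact_Icc.prod isCompact_univ)).image
      continuous_quot_mk)
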